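/- Let B_l be independent Bernoulli with Pr{B_l=1} = 1/(1+e^{λ2^l}) for λ > 0. Then for any t < λ, the moment generating function of B = Σ_{l=-∞}^{∞} 2^l B_l equals λ/(λ - t). -/

import Mathlib

open MeasureTheory ProbabilityTheory Filter

namespace Stmt5Aux

lemma exp_lt_one' {c : ℝ} (hc : 0 < c) (m : ℤ) : Real.exp (-(c * 2 ^ m)) < 1 := by
  rw [Real.exp_lt_one_iff]
  have : (0:ℝ) < 2 ^ m := by positivity
  nlinarith

lemma hsq (c : ℝ) (m : ℤ) :
    Real.exp (-(c * 2 ^ m)) * Real.exp (-(c * 2 ^ m)) = Real.exp (-(c * 2 ^ (m + 1))) := by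
  rw [← Real.exp_add, zpow_add_one₀ (two_ne_zero)]
  ring_nf

lemma tele (c : ℝ) (hc : 0 < c) (a : ℤ) (n : ℕ) :
    ∏ l ∈ Finset.Icc a (a + (n : ℤ)), (1 + Real.exp (-(c * 2 ^ l))) =
      (1 - Real.exp (-(c * 2 ^ (a + (n : ℤ) + 1)))) / (1 - Real.exp (-(c * 2 ^ a))) := by
  have hne : ∀ m : ℤ, 1 - Real.exp (-(c * 2 ^ m)) ≠ 0 := fun m => by
    have := exp_lt_one' hc m; linarith
  induction n with
  | zero =>
      simp only [Nat.cast_zero, add_zero, Finset.Icc_self, Finset.prod_singleton]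
      rw [eq_div_iff (hne a)]
      have := hsq c a
      nlinarith [this]
  | succ n ih =>
      have hins : Finset.Icc a (a + ((n : ℤ) + 1)) =
          insert (a + (n : ℤ) + 1) (Finset.Icc a (a + (n : ℤ))) := by
        ext x
        simp only [Finset.mem_Icc, Finset.mem_insert]
        omega
      have hnotmem : a + (n : ℤ) + 1 ∉ Finset.Icc a (a + (n : ℤ)) := by
        simp only [Finset.mem_Icc]; omega
      push_cast
      rw [hins, Finset.prod_insert hnotmem, ih,
        show a + ((n:ℤ) + 1) + 1 = (a + (n:ℤ) + 1) + 1 by ring, ← hsq c (a + (n:ℤ) + 1),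
        mul_div_assoc']
      congr 1
      ring

lemma slope_lim {c : ℝ} (hc : c ≠ 0) :
    Tendsto (fun x : ℝ => (1 - Real.exp (-(c * x))) / x) (nhdsWithin 0 {0}ᶜ) (nhds c) := by
  have hd : HasDerivAt (fun x : ℝ => 1 - Real.exp (-(c * x))) c 0 := by
    have h1 : HasDerivAt (fun x : ℝ => -(c * x)) (-c) 0 := by
      simpa [Pi.neg_def] using ((hasDerivAt_id (0:ℝ)).const_mul c).neg
    have h2 := h1.exp
    simpa using (h2.const_sub 1)
  have := hasDerivAt_iff_tendsto_slope.mp hd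
  refine this.congr' ?_
  filter_upwards [self_mem_nhdsWithin] with x hx
  simp only [slope_def_field]
  rw [div_eq_div_iff (by simpa using hx) (by simpa using hx)]
  simp [Real.exp_zero]

lemma ratio_lim {lam t : ℝ} (hlam : 0 < lam) (ht : t < lam) :
    Tendsto (fun N : ℕ =>
        (1 - Real.exp (-(lam * 2 ^ (-(N:ℤ))))) / (1 - Real.exp (-((lam - t) * 2 ^ (-(N:ℤ))))))
      atTop (nhds (lam / (lam - t))) := by
  have hlt : (0:ℝ) < lam - t := by linarith
  have h1 := slope_lim (c := lam) hlam.ne'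
  have h2 := slope_lim (c := lam - t) hlt.ne'
  have hdiv := h1.div h2 hlt.ne'
  have hdiv' : Tendsto (fun x : ℝ =>
      (1 - Real.exp (-(lam * x))) / (1 - Real.exp (-((lam - t) * x))))
      (nhdsWithin 0 {0}ᶜ) (nhds (lam / (lam - t))) := by
    refine hdiv.congr' ?_
    filter_upwards [self_mem_nhdsWithin] with x hx
    have hx0 : x ≠ 0 := by simpa using hx
    rw [Pi.div_apply, div_div_div_cancel_right₀ hx0]
  have hxN : Tendsto (fun N : ℕ => ((2:ℝ) ^ (-(N:ℤ)))) atTop (nhdsWithin 0 {0}ᶜ) := by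
    apply tendsto_nhdsWithin_of_tendsto_nhds_of_eventually_within
    · have : (fun N : ℕ => ((2:ℝ) ^ (-(N:ℤ)))) = fun N : ℕ => ((2:ℝ)⁻¹) ^ N := by
        funext N; rw [zpow_neg, zpow_natCast, inv_pow]
      rw [this]
      exact tendsto_pow_atTop_nhds_zero_of_lt_one (by norm_num) (by norm_num)
    · filter_upwards with N
      simp only [Set.mem_compl_iff, Set.mem_singleton_iff]
      positivity
  exact hdiv'.comp hxN

lemma exp_pow_lim {c : ℝ} (hc : 0 < c) :
    Tendsto (fun N : ℕ => Real.exp (-(c * 2 ^ ((N:ℤ) + 1)))) atTop (nhds 0) := by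
  apply Real.tendsto_exp_atBot.comp
  apply tendsto_neg_atBot_iff.mpr
  apply Tendsto.const_mul_atTop hc
  have : (fun N : ℕ => ((2:ℝ) ^ ((N:ℤ) + 1))) = fun N : ℕ => 2 * (2:ℝ) ^ N := by
    funext N; rw [zpow_add_one₀ two_ne_zero, zpow_natCast]; ring
  rw [this]
  exact (tendsto_pow_atTop_atTop_of_one_lt (by norm_num)).const_mul_atTop (by norm_num)

end Stmt5Aux

open Stmt5Aux

theorem stmt_5 {Ω : Type*} [MeasurableSpace Ω] (μ : Measure Ω) [IsProbabilityMeasure μ]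
    (lam : ℝ) (hlam : 0 < lam) (B : ℤ → Ω → ℝ)
    (hmeas : ∀ l, Measurable (B l))
    (hval : ∀ l ω, B l ω = 0 ∨ B l ω = 1)
    (hindep : iIndepFun B μ)
    (hber : ∀ l : ℤ,
      μ {ω | B l ω = 1} = ENNReal.ofReal (1 / (1 + Real.exp (lam * 2 ^ l))))
    (hsum : ∀ᵐ ω ∂μ, Summable fun l : ℤ => (2 : ℝ) ^ l * B l ω)
    (t : ℝ) (ht : t < lam) :
    mgf (fun ω => ∑' l : ℤ, (2 : ℝ) ^ l * B l ω) μ t = lam / (lam - t) := by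
  classical
  have hlt : (0:ℝ) < lam - t := by linarith
  set X : ℤ → Ω → ℝ := fun l ω => (2:ℝ) ^ l * B l ω with hXdef
  have hXmeas : ∀ l, Measurable (X l) := fun l => (hmeas l).const_mul _
  have hXindep : iIndepFun X μ := by
    have := hindep.comp (fun l : ℤ => fun x : ℝ => (2:ℝ) ^ l * x)
      (fun l => measurable_const_mul _)
    exact this
  -- mgf of a single summand
  have hXint : ∀ l, Integrable (fun ω => Real.exp (t * X l ω)) μ := by
    intro l
    refine (integrable_const (max 1 (Real.exp (t * 2 ^ l)))).mono'
      (((hXmeas l).const_mul t).exp.aestronglyMeasurable) ?_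
    filter_upwards with ω
    rw [Real.norm_eq_abs, abs_of_pos (Real.exp_pos _)]
    rcases hval l ω with h | h
    · simp [hXdef, h]
    · simp only [hXdef, h, mul_one]
      exact le_max_right _ _
  have hBint : ∀ l, Integrable (B l) μ := by
    intro l
    refine (integrable_const (1:ℝ)).mono' (hmeas l).aestronglyMeasurable ?_
    filter_upwards with ω
    rcases hval l ω with h | h <;> simp [h]
  have hsingle : ∀ l : ℤ, mgf (X l) μ t =
      (1 + Real.exp (-((lam - t) * 2 ^ l))) / (1 + Real.exp (-(lam * 2 ^ l))) := by
    intro l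
    have hptw : (fun ω => Real.exp (t * X l ω)) =
        fun ω => 1 + (Real.exp (t * 2 ^ l) - 1) * B l ω := by
      funext ω
      rcases hval l ω with h | h
      · simp [hXdef, h]
      · simp [hXdef, h]
    have hind : B l = Set.indicator {ω | B l ω = 1} (fun _ => (1:ℝ)) := by
      funext ω
      by_cases h : ω ∈ {ω | B l ω = 1}
      · simp [Set.indicator_of_mem h, h.out]
      · rcases hval l ω with h0 | h1
        · simp [Set.indicator_of_notMem h, h0]
        · exact absurd h1 h
    have hAmeas : MeasurableSet {ω | B l ω = 1} := by
      have : {ω | B l ω = 1} = B l ⁻¹' {1} := rfl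
      rw [this]; exact (hmeas l) (measurableSet_singleton 1)
    have hEB : ∫ ω, B l ω ∂μ = 1 / (1 + Real.exp (lam * 2 ^ l)) := by
      rw [show (fun ω => B l ω) = B l from rfl, hind]
      rw [integral_indicator_const (1:ℝ) hAmeas]
      rw [measureReal_def, hber l, smul_eq_mul, mul_one, ENNReal.toReal_ofReal (by positivity)]
    rw [mgf]
    rw [show (fun ω => Real.exp (t * X l ω)) = fun ω => 1 + (Real.exp (t * 2 ^ l) - 1) * B l ω
      from hptw]
    rw [integral_add (integrable_const 1) ((hBint l).const_mul _), integral_const,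
      measureReal_def, measure_univ, ENNReal.toReal_one, smul_eq_mul, mul_one, integral_const_mul, hEB]
    -- pure algebra
    have hE : (0:ℝ) < Real.exp (lam * 2 ^ l) := Real.exp_pos _
    rw [show -((lam - t) * 2 ^ l) = t * 2 ^ l - lam * 2 ^ l by ring, Real.exp_sub,
      show -(lam * 2 ^ l) = -(lam * 2 ^ l) from rfl, Real.exp_neg]
    field_simp
    ring
  -- partial sums
  set Bfull : Ω → ℝ := fun ω => ∑' l : ℤ, X l ω with hBdef
  set S : ℕ → Ω → ℝ := fun N ω => ∑ l ∈ Finset.Icc (-(N:ℤ)) (N:ℤ), X l ω with hSdef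
  have hSmeas : ∀ N, Measurable (S N) := fun N =>
    Finset.measurable_sum _ (fun l _ => hXmeas l)
  have hIcc : Tendsto (fun N : ℕ => Finset.Icc (-(N:ℤ)) (N:ℤ)) atTop atTop := by
    apply tendsto_atTop_finset_of_monotone
    · intro N M hNM
      exact Finset.Icc_subset_Icc (by omega) (by omega)
    · intro l
      exact ⟨l.natAbs, by simp only [Finset.mem_Icc]; omega⟩
  have hae : ∀ᵐ ω ∂μ, Tendsto (fun N => S N ω) atTop (nhds (Bfull ω)) := by
    filter_upwards [hsum] with ω hω
    exact hω.hasSum.comp hIcc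
  have hXnn : ∀ l ω, 0 ≤ X l ω := by
    intro l ω
    rcases hval l ω with h | h <;> simp [hXdef, h] <;> positivity
  have hSnn : ∀ N ω, 0 ≤ S N ω := fun N ω =>
    Finset.sum_nonneg fun l _ => hXnn l ω
  -- lintegral of partial sums
  have hlin : ∀ N : ℕ, ∫⁻ ω, ENNReal.ofReal (Real.exp (t * S N ω)) ∂μ =
      ENNReal.ofReal (∏ l ∈ Finset.Icc (-(N:ℤ)) (N:ℤ), mgf (X l) μ t) := by
    intro N
    have hSeq : S N = (∑ l ∈ Finset.Icc (-(N:ℤ)) (N:ℤ), X l) := by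
      funext ω; simp [hSdef, Finset.sum_apply]
    have hSint : Integrable (fun ω => Real.exp (t * S N ω)) μ := by
      rw [hSeq]
      exact hXindep.integrable_exp_mul_sum hXmeas (fun l _ => hXint l)
    rw [← ofReal_integral_eq_lintegral_ofReal hSint
      (Filter.Eventually.of_forall fun ω => (Real.exp_pos _).le)]
    congr 1
    have hms := hXindep.mgf_sum hXmeas (s := Finset.Icc (-(N:ℤ)) (N:ℤ)) (t := t)
    rw [← hms, mgf, hSeq]
  -- product converges
  have hProd : Tendsto (fun N : ℕ => ∏ l ∈ Finset.Icc (-(N:ℤ)) (N:ℤ), mgf (X l) μ t)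
      atTop (nhds (lam / (lam - t))) := by
    have hrw : ∀ N : ℕ, ∏ l ∈ Finset.Icc (-(N:ℤ)) (N:ℤ), mgf (X l) μ t =
        ((1 - Real.exp (-((lam - t) * 2 ^ ((N:ℤ) + 1)))) /
            (1 - Real.exp (-(lam * 2 ^ ((N:ℤ) + 1))))) *
          ((1 - Real.exp (-(lam * 2 ^ (-(N:ℤ))))) /
            (1 - Real.exp (-((lam - t) * 2 ^ (-(N:ℤ)))))) := by
      intro N
      have hIccEq : (N:ℤ) = -(N:ℤ) + ((2*N : ℕ) : ℤ) := by push_cast; ring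
      have h1 : -(N:ℤ) + ((2*N:ℕ):ℤ) + 1 = (N:ℤ) + 1 := by push_cast; ring
      calc ∏ l ∈ Finset.Icc (-(N:ℤ)) (N:ℤ), mgf (X l) μ t
          = ∏ l ∈ Finset.Icc (-(N:ℤ)) (-(N:ℤ) + ((2*N:ℕ):ℤ)),
              ((1 + Real.exp (-((lam - t) * 2 ^ l))) / (1 + Real.exp (-(lam * 2 ^ l)))) := by
            rw [← hIccEq]; exact Finset.prod_congr rfl fun l _ => hsingle l
        _ = (∏ l ∈ Finset.Icc (-(N:ℤ)) (-(N:ℤ) + ((2*N:ℕ):ℤ)),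
                (1 + Real.exp (-((lam - t) * 2 ^ l)))) /
            (∏ l ∈ Finset.Icc (-(N:ℤ)) (-(N:ℤ) + ((2*N:ℕ):ℤ)),
                (1 + Real.exp (-(lam * 2 ^ l)))) := Finset.prod_div_distrib _ _
        _ = _ := by
            rw [tele (lam - t) hlt, tele lam hlam, h1,
              div_div_div_comm, div_div_eq_mul_div, mul_div_assoc]
    simp_rw [hrw]
    have hA : Tendsto (fun N : ℕ =>
        (1 - Real.exp (-((lam - t) * 2 ^ ((N:ℤ) + 1)))) /
          (1 - Real.exp (-(lam * 2 ^ ((N:ℤ) + 1))))) atTop (nhds ((1 - 0) / (1 - 0))) :=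
      Tendsto.div (tendsto_const_nhds.sub (exp_pow_lim hlt))
        (tendsto_const_nhds.sub (exp_pow_lim hlam)) (by norm_num)
    have := hA.mul (ratio_lim hlam ht)
    simpa using this
  -- key lintegral identity
  have key : ∫⁻ ω, ENNReal.ofReal (Real.exp (t * Bfull ω)) ∂μ =
      ENNReal.ofReal (lam / (lam - t)) := by
    have htendF : Tendsto (fun N => ∫⁻ ω, ENNReal.ofReal (Real.exp (t * S N ω)) ∂μ) atTop
        (nhds (∫⁻ ω, ENNReal.ofReal (Real.exp (t * Bfull ω)) ∂μ)) := by
      have hlim : ∀ᵐ ω ∂μ, Tendsto (fun N => ENNReal.ofReal (Real.exp (t * S N ω))) atTop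
          (nhds (ENNReal.ofReal (Real.exp (t * Bfull ω)))) := by
        filter_upwards [hae] with ω hω
        exact (ENNReal.continuous_ofReal.tendsto _).comp
          ((Real.continuous_exp.tendsto _).comp (hω.const_mul t))
      rcases le_or_gt 0 t with htpos | htneg
      · apply lintegral_tendsto_of_tendsto_of_monotone
        · exact fun N =>
            (ENNReal.measurable_ofReal.comp ((hSmeas N).const_mul t).exp).aemeasurable
        · filter_upwards with ω N M hNM
          apply ENNReal.ofReal_le_ofReal
          apply Real.exp_le_exp.2
          apply mul_le_mul_of_nonneg_left _ htpos
          exact Finset.sum_le_sum_of_subset_of_nonneg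
            (Finset.Icc_subset_Icc (by omega) (by omega)) (fun l _ _ => hXnn l ω)
        · exact hlim
      · apply tendsto_lintegral_of_dominated_convergence (fun _ => 1)
        · exact fun N => ENNReal.measurable_ofReal.comp ((hSmeas N).const_mul t).exp
        · intro N
          filter_upwards with ω
          have : Real.exp (t * S N ω) ≤ 1 := by
            rw [show (1:ℝ) = Real.exp 0 by simp]
            apply Real.exp_le_exp.2
            exact mul_nonpos_of_nonpos_of_nonneg htneg.le (hSnn N ω)
          calc ENNReal.ofReal (Real.exp (t * S N ω)) ≤ ENNReal.ofReal 1 :=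
                ENNReal.ofReal_le_ofReal this
            _ = 1 := ENNReal.ofReal_one
        · simp [lintegral_const]
        · exact hlim
    have h2 : Tendsto (fun N => ∫⁻ ω, ENNReal.ofReal (Real.exp (t * S N ω)) ∂μ) atTop
        (nhds (ENNReal.ofReal (lam / (lam - t)))) := by
      simp_rw [hlin]
      exact (ENNReal.continuous_ofReal.tendsto _).comp hProd
    exact tendsto_nhds_unique htendF h2
  -- conclude
  have hFmeas : AEStronglyMeasurable Bfull μ :=
    aestronglyMeasurable_of_tendsto_ae atTop
      (fun N => (hSmeas N).aestronglyMeasurable) hae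
  have hexpmeas : AEStronglyMeasurable (fun ω => Real.exp (t * Bfull ω)) μ :=
    Real.continuous_exp.comp_aestronglyMeasurable (hFmeas.const_mul t)
  rw [mgf]
  rw [show (fun ω => Real.exp (t * (fun ω => ∑' l : ℤ, (2:ℝ) ^ l * B l ω) ω)) =
      (fun ω => Real.exp (t * Bfull ω)) from rfl]
  rw [integral_eq_lintegral_of_nonneg_ae
    (Filter.Eventually.of_forall fun ω => (Real.exp_pos _).le) hexpmeas, key,
    ENNReal.toReal_ofReal (by positivity)]
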